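/- Let F be a field, let k ≥ 1, and let Z_1, …, Z_k be subsets of F^k such that for each i, Z_i is not contained in any hyperplane through the origin; that is, for every nonzero linear functional c : F^k → F (equivalently, every nonzero vector c ∈ F^k), there exists x ∈ Z_i with c_1 x_1 + ⋯ + c_k x_k ≠ 0. Then there exist points x_1 ∈ Z_1, …, x_k ∈ Z_k such that the k×k matrix whose columns are x_1, …, x_k has nonzero determinant. -/

import Mathlib

open Finset Matrix

noncomputable section

/-- The intersection `⋂_{j ∈ p} A j`, as a `Finset (Fin n)`. -/
def interSet {ℓ n : ℕ} (A : Fin ℓ → Finset (Fin n)) (p : Finset (Fin ℓ)) : Finset (Fin n) :=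
  Finset.univ.filter fun x => ∀ j ∈ p, x ∈ A j

/-- The dimension-`m` null intersection property: for every partition of `{1,…,ℓ}`
(presented as a `Finpartition` of `Finset.univ : Finset (Fin ℓ)`) into nonempty parts
`P_1,…,P_s`, we have `Σ_i |⋂_{j ∈ P_i} A_j| ≤ (s-1)·m`. -/
def NullInter {ℓ n : ℕ} (m : ℕ) (A : Fin ℓ → Finset (Fin n)) : Prop :=
  ∀ P : Finpartition (Finset.univ : Finset (Fin ℓ)),
    ∑ p ∈ P.parts, (interSet A p).card ≤ (P.parts.card - 1) * m

/-- Span of the columns of `M` indexed by `A`. -/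
def colSpan {K : Type*} [Field K] {k n : ℕ} (M : Matrix (Fin k) (Fin n) K)
    (A : Finset (Fin n)) : Submodule K (Fin k → K) :=
  Submodule.span K ((fun j i => M i j) '' (A : Set (Fin n)))

/-- Span of the first `σ` columns of `M`. -/
def colSpanLT {K : Type*} [Field K] {k b : ℕ} (M : Matrix (Fin k) (Fin b) K)
    (σ : ℕ) : Submodule K (Fin k → K) :=
  Submodule.span K ((fun j i => M i j) '' {j : Fin b | (j : ℕ) < σ})

/-- The minimum of `σ` over the set `p` (for nonempty `p`, this is `min_{j ∈ p} σ j`). -/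
def partMin {ℓ : ℕ} (σ : Fin ℓ → ℕ) (p : Finset (Fin ℓ)) : ℕ :=
  sInf (σ '' (p : Set (Fin ℓ)))

/-- The generic intersection dimension `gid_m((σ_i, A_i)_i)`: the maximum over all
partitions of `{1,…,ℓ}` into nonempty parts `P_1,…,P_s` of
`-m(s-1) + Σ_i (min_{j ∈ P_i} σ_j + |⋂_{j ∈ P_i} A_j|)`. -/
def gid {ℓ n : ℕ} (m : ℕ) (σ : Fin ℓ → ℕ) (A : Fin ℓ → Finset (Fin n)) : ℤ :=
  sSup { v : ℤ | ∃ P : Finpartition (Finset.univ : Finset (Fin ℓ)),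
    v = -(m : ℤ) * ((P.parts.card : ℤ) - 1)
      + ∑ p ∈ P.parts, ((partMin σ p : ℤ) + ((interSet A p).card : ℤ)) }

/-- If each set `Z_i ⊆ F^k` is not contained in any hyperplane through the origin,
then one can pick a point from each `Z_i` so that the resulting `k × k` matrix of
columns has nonzero determinant. -/
theorem exists_points_det_ne_zero
    (F : Type*) [Field F] (k : ℕ) (hk : 1 ≤ k)
    (Z : Fin k → Set (Fin k → F))
    (hZ : ∀ i, ∀ c : Fin k → F, c ≠ 0 → ∃ x ∈ Z i, (∑ t, c t * x t) ≠ 0) :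
    ∃ x : Fin k → (Fin k → F), (∀ j, x j ∈ Z j) ∧
      (Matrix.of fun i j : Fin k => x j i).det ≠ 0 := by
  have key : ∀ j : ℕ, ∀ hj : j ≤ k, ∃ x : Fin k → (Fin k → F), (∀ i, x i ∈ Z i) ∧
      LinearIndependent F (fun i : Fin j => x (Fin.castLE hj i)) := by
    intro j
    induction j with
    | zero =>
      intro _
      have hne : ∀ i, ∃ y, y ∈ Z i := by
        intro i
        have hc : (fun _ : Fin k => (1 : F)) ≠ 0 := by
          intro h
          have := congrFun h ⟨0, hk⟩
          simp at this
        obtain ⟨y, hy, -⟩ := hZ i _ hc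
        exact ⟨y, hy⟩
      choose x hx using hne
      exact ⟨x, hx, linearIndependent_empty_type⟩
    | succ j ih =>
      intro hj
      have hj' : j ≤ k := Nat.le_of_succ_le hj
      have hjk : j < k := hj
      obtain ⟨x, hmem, hli⟩ := ih hj'
      set v : Fin j → (Fin k → F) := fun i => x (Fin.castLE hj' i) with hv
      set S : Submodule F (Fin k → F) := Submodule.span F (Set.range v) with hS
      have hlt : S < ⊤ := by
        rw [lt_top_iff_ne_top]
        intro htop
        have h1 : Module.finrank F S ≤ j := by
          simpa [Set.finrank] using finrank_range_le_card (R := F) v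
        rw [htop] at h1
        have h2 : Module.finrank F (⊤ : Submodule F (Fin k → F)) = k := by
          simp [Module.finrank_pi]
        omega
      obtain ⟨φ, hφ0, hφmap⟩ := S.exists_dual_map_eq_bot_of_lt_top hlt inferInstance
      set c : Fin k → F := fun t => φ (fun s => if t = s then 1 else 0) with hcdef
      have hphi : ∀ w : Fin k → F, φ w = ∑ t, c t * w t := by
        intro w
        rw [LinearMap.pi_apply_eq_sum_univ]
        exact Finset.sum_congr rfl fun t _ => by rw [smul_eq_mul, mul_comm]
      have hc : c ≠ 0 := by
        intro h
        apply hφ0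
        apply LinearMap.ext
        intro w
        rw [hphi]
        simp [show ∀ t, c t = 0 from fun t => congrFun h t]
      obtain ⟨y, hyZ, hy⟩ := hZ ⟨j, hjk⟩ c hc
      have hyS : y ∉ S := by
        intro hyS
        apply hy
        rw [← hphi]
        have : φ y ∈ S.map φ := Submodule.mem_map_of_mem hyS
        rw [hφmap] at this
        simpa using this
      refine ⟨Function.update x ⟨j, hjk⟩ y, ?_, ?_⟩
      · intro i
        rcases eq_or_ne i ⟨j, hjk⟩ with rfl | h
        · simpa using hyZ
        · rw [Function.update_of_ne h]; exact hmem i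
      · have heq : (fun i : Fin (j+1) => Function.update x ⟨j, hjk⟩ y (Fin.castLE hj i))
            = Fin.snoc v y := by
          funext i
          refine Fin.lastCases ?_ ?_ i
          · have : Fin.castLE hj (Fin.last j) = (⟨j, hjk⟩ : Fin k) := rfl
            rw [this, Function.update_self, Fin.snoc_last]
          · intro i'
            have h1 : Fin.castLE hj (Fin.castSucc i') = Fin.castLE hj' i' := rfl
            have h2 : Fin.castLE hj' i' ≠ (⟨j, hjk⟩ : Fin k) := by
              intro h
              have := congrArg Fin.val h
              simp at this
              omega
            rw [h1, Function.update_of_ne h2, Fin.snoc_castSucc]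
        rw [heq, linearIndependent_fin_snoc]
        exact ⟨hli, hyS⟩
  obtain ⟨x, hmem, hli⟩ := key k le_rfl
  have hli' : LinearIndependent F x := by
    have : (fun i : Fin k => x (Fin.castLE le_rfl i)) = x := by
      funext i; rfl
    rwa [this] at hli
  refine ⟨x, hmem, ?_⟩
  have hunit : IsUnit (Matrix.of fun i j : Fin k => x j i) := by
    rw [← Matrix.linearIndependent_cols_iff_isUnit]
    exact hli'
  have := (Matrix.isUnit_iff_isUnit_det _).mp hunit
  exact this.ne_zero
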